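/- There exists a set of ground rules R and an ambient finite set A of atoms such that the intersection of all optimal censors for A and R is not a censor. Concretely: let c0, b1, b2 be three distinct atoms, let A = {c0, b1, b2}, and let R consist of the denial rule ({b1, b2}, ∅) and the rule ({c0}, {{b1}, {b2}}). Then the optimal censors for A and R are exactly {c0, b1} and {c0, b2}, and their intersection {c0} does not satisfy R. -/
import Mathlib


/-- A ground rule: a finite body and a family of finite head images. -/
structure GroundRule (α : Type*) where
  body : Finset α
  heads : Set (Finset α)

/-- A set of atoms `C` satisfies a ground rule `(B, Q)` if `B ⊆ C` implies
that `I ⊆ C` for some `I ∈ Q`. -/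
def RuleSat {α : Type*} (C : Set α) (r : GroundRule α) : Prop :=
  ↑r.body ⊆ C → ∃ I ∈ r.heads, ↑I ⊆ C

/-- `C` satisfies a set of ground rules if it satisfies every rule in it. -/
def SatisfiesSet {α : Type*} (C : Set α) (R : Set (GroundRule α)) : Prop :=
  ∀ r ∈ R, RuleSat C r

/-- A censor for an ambient set `A` and rules `R` is a subset of `A` satisfying `R`. -/
def Censor {α : Type*} (A : Set α) (R : Set (GroundRule α)) (C : Set α) : Prop :=
  C ⊆ A ∧ SatisfiesSet C R

/-- An optimal censor is a censor that is maximal w.r.t. set inclusion. -/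
def OptimalCensor {α : Type*} (A : Set α) (R : Set (GroundRule α)) (C : Set α) : Prop :=
  Censor A R C ∧ ∀ C', Censor A R C' → C ⊆ C' → C' = C

/-- a concrete instance in which the intersection of all optimal
censors is not a censor (it does not satisfy the rules). -/
theorem stmt3 {α : Type*} [DecidableEq α] (c0 b1 b2 : α)
    (h1 : c0 ≠ b1) (h2 : c0 ≠ b2) (h3 : b1 ≠ b2) :
    let A : Set α := {c0, b1, b2}
    let R : Set (GroundRule α) :=
      {⟨{b1, b2}, ∅⟩, ⟨{c0}, {{b1}, {b2}}⟩}
    {C | OptimalCensor A R C} = {({c0, b1} : Set α), {c0, b2}} ∧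
    ⋂₀ {C | OptimalCensor A R C} = {c0} ∧
    ¬ SatisfiesSet ({c0} : Set α) R := by
  intro A R
  have hsat : ∀ C : Set α, SatisfiesSet C R ↔
      (¬(b1 ∈ C ∧ b2 ∈ C)) ∧ (c0 ∈ C → b1 ∈ C ∨ b2 ∈ C) := by
    intro C
    constructor
    · intro h
      refine ⟨?_, ?_⟩
      · rintro ⟨hb1, hb2⟩
        have := h ⟨{b1, b2}, ∅⟩ (Or.inl rfl)
        simp [RuleSat, Set.insert_subset_iff, hb1, hb2] at this
      · intro hc
        have hm : (⟨{c0}, {{b1}, {b2}}⟩ : GroundRule α) ∈ R :=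
          Set.mem_insert_iff.mpr (Or.inr rfl)
        have := h _ hm
        simp only [RuleSat, Finset.coe_singleton, Set.singleton_subset_iff] at this
        rcases this hc with ⟨I, hI, hsub⟩
        rcases hI with rfl | rfl
        · left; simpa using hsub
        · right; simpa using hsub
    · rintro ⟨hne, himp⟩ r hr
      rcases hr with rfl | rfl
      · intro hsub
        simp only [Finset.coe_insert, Finset.coe_singleton, Set.insert_subset_iff,
          Set.singleton_subset_iff] at hsub
        exact absurd hsub hne
      · intro hsub
        simp only [Finset.coe_singleton, Set.singleton_subset_iff] at hsub
        rcases himp hsub with h | h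
        · exact ⟨{b1}, Or.inl rfl, by simpa⟩
        · exact ⟨{b2}, Or.inr rfl, by simpa⟩
  have hC1 : Censor A R {c0, b1} := by
    refine ⟨?_, (hsat _).2 ⟨?_, ?_⟩⟩
    · intro x hx; rcases hx with rfl | rfl
      · exact Or.inl rfl
      · exact Or.inr (Or.inl rfl)
    · rintro ⟨-, hb2⟩
      rcases hb2 with h | h
      · exact h2 h.symm
      · exact h3 h.symm
    · intro _; exact Or.inl (Or.inr rfl)
  have hC2 : Censor A R {c0, b2} := by
    refine ⟨?_, (hsat _).2 ⟨?_, ?_⟩⟩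
    · intro x hx; rcases hx with rfl | rfl
      · exact Or.inl rfl
      · exact Or.inr (Or.inr rfl)
    · rintro ⟨hb1, -⟩
      rcases hb1 with h | h
      · exact h1 h.symm
      · exact h3 h
    · intro _; exact Or.inr (Or.inr rfl)
  -- any censor containing b1 is ⊆ {c0, b1}; similarly for b2
  have hmax1 : ∀ C : Set α, Censor A R C → b1 ∈ C → C ⊆ {c0, b1} := by
    intro C ⟨hA, hS⟩ hb1 x hx
    have hb2 : b2 ∉ C := fun hb2 => ((hsat C).1 hS).1 ⟨hb1, hb2⟩
    rcases hA hx with rfl | rfl | rfl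
    · exact Or.inl rfl
    · exact Or.inr rfl
    · exact absurd hx hb2
  have hmax2 : ∀ C : Set α, Censor A R C → b2 ∈ C → C ⊆ {c0, b2} := by
    intro C ⟨hA, hS⟩ hb2 x hx
    have hb1 : b1 ∉ C := fun hb1 => ((hsat C).1 hS).1 ⟨hb1, hb2⟩
    rcases hA hx with rfl | rfl | rfl
    · exact Or.inl rfl
    · exact absurd hx hb1
    · exact Or.inr rfl
  have hO1 : OptimalCensor A R {c0, b1} := by
    refine ⟨hC1, fun C' hC' hsub => ?_⟩
    exact Set.Subset.antisymm (hmax1 C' hC' (hsub (Or.inr rfl))) hsub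
  have hO2 : OptimalCensor A R {c0, b2} := by
    refine ⟨hC2, fun C' hC' hsub => ?_⟩
    exact Set.Subset.antisymm (hmax2 C' hC' (hsub (Or.inr rfl))) hsub
  have hset : {C | OptimalCensor A R C} = {({c0, b1} : Set α), {c0, b2}} := by
    ext C
    constructor
    · rintro ⟨hC, hmax⟩
      by_cases hb1 : b1 ∈ C
      · exact Or.inl (hmax _ hC1 (hmax1 C hC hb1)).symm
      · by_cases hb2 : b2 ∈ C
        · exact Or.inr (hmax _ hC2 (hmax2 C hC hb2)).symm
        · -- C = ∅, contradiction with maximality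
          have hCe : C ⊆ ({c0, b1} : Set α) := by
            intro x hx
            rcases hC.1 hx with rfl | rfl | rfl
            · exact Or.inl rfl
            · exact Or.inr rfl
            · exact absurd hx hb2
          have := hmax _ hC1 hCe
          exact Or.inl this.symm
    · rintro (rfl | rfl)
      · exact hO1
      · exact hO2
  refine ⟨hset, ?_, ?_⟩
  · rw [hset, Set.sInter_pair]
    ext x
    simp only [Set.mem_inter_iff, Set.mem_insert_iff, Set.mem_singleton_iff]
    constructor
    · rintro ⟨h | h, h' | h'⟩
      · exact h
      · exact h
      · exact h'
      · exact absurd (h.symm.trans h') h3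
    · rintro rfl; exact ⟨Or.inl rfl, Or.inl rfl⟩
  · intro hS
    rcases ((hsat _).1 hS).2 rfl with h | h
    · exact h1 h.symm
    · exact h2 h.symm
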